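/- Let T³ act on S⁷ ⊂ ℂ⁴ by (e^{iα}, e^{iβ}, e^{iγ})·z = (e^{i(α+β)}z₁, e^{i(α−β)}z₂, e^{i(α+γ)}z₃, e^{i(α−γ)}z₄). For p₀ = (x₁, x₂, x₃, x₄ + iy₄) with x₁, x₂, x₃ > 0 real and y₄ real, x₁²+x₂²+x₃²+x₄²+y₄² = 1, the system ζⱼ(p₀) = 0 for j = 1,…,4, where (ζ₁,ζ₂,ζ₃,ζ₄) = (−iz₂z̄₃z̄₄, −iz₁z̄₃z̄₄, iz̄₁z̄₂z₄, iz̄₁z̄₂z₃) − 4Im(z₁z₂z̄₃z̄₄)(z̄₁,z̄₂,z̄₃,z̄₄), has exactly the solutions x₁ = x₂ = x₃ = 1/2, x₄ = 0, y₄ = ±1/2. -/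
import Mathlib


open Complex

/- STATEMENT 12: For p₀ = (x₁, x₂, x₃, x₄ + iy₄) ∈ S⁷ with x₁, x₂, x₃ > 0, the system
ζⱼ(p₀) = 0 (j = 1,…,4), where
(ζ₁,ζ₂,ζ₃,ζ₄) = (−iz₂z̄₃z̄₄, −iz₁z̄₃z̄₄, iz̄₁z̄₂z₄, iz̄₁z̄₂z₃) − 4Im(z₁z₂z̄₃z̄₄)(z̄₁,z̄₂,z̄₃,z̄₄),
has exactly the solutions x₁ = x₂ = x₃ = 1/2, x₄ = 0, y₄ = ±1/2. -/
theorem T3_associative_orbit_equations (x₁ x₂ x₃ x₄ y₄ : ℝ)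
    (h₁ : 0 < x₁) (h₂ : 0 < x₂) (h₃ : 0 < x₃)
    (hnorm : x₁ ^ 2 + x₂ ^ 2 + x₃ ^ 2 + x₄ ^ 2 + y₄ ^ 2 = 1) :
    let z₁ : ℂ := (x₁ : ℂ)
    let z₂ : ℂ := (x₂ : ℂ)
    let z₃ : ℂ := (x₃ : ℂ)
    let z₄ : ℂ := (x₄ : ℂ) + (y₄ : ℂ) * I
    let m : ℝ := (z₁ * z₂ * (starRingEnd ℂ) z₃ * (starRingEnd ℂ) z₄).im
    (-I * z₂ * (starRingEnd ℂ) z₃ * (starRingEnd ℂ) z₄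
        - 4 * (m : ℂ) * (starRingEnd ℂ) z₁ = 0 ∧
     -I * z₁ * (starRingEnd ℂ) z₃ * (starRingEnd ℂ) z₄
        - 4 * (m : ℂ) * (starRingEnd ℂ) z₂ = 0 ∧
     I * (starRingEnd ℂ) z₁ * (starRingEnd ℂ) z₂ * z₄
        - 4 * (m : ℂ) * (starRingEnd ℂ) z₃ = 0 ∧
     I * (starRingEnd ℂ) z₁ * (starRingEnd ℂ) z₂ * z₃
        - 4 * (m : ℂ) * (starRingEnd ℂ) z₄ = 0) ↔
      (x₁ = 1 / 2 ∧ x₂ = 1 / 2 ∧ x₃ = 1 / 2 ∧ x₄ = 0 ∧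
        (y₄ = 1 / 2 ∨ y₄ = -(1 / 2))) := by
  intro z₁ z₂ z₃ z₄ m
  have hm : m = -(x₁ * x₂ * x₃ * y₄) := by
    simp only [m, z₁, z₂, z₃, z₄, map_add, map_mul, conj_ofReal, conj_I]
    simp only [Complex.mul_im, Complex.mul_re, Complex.add_re, Complex.add_im,
      Complex.ofReal_re, Complex.ofReal_im, Complex.I_re, Complex.I_im,
      Complex.neg_re, Complex.neg_im]
    ring
  constructor
  · rintro ⟨e1, e2, e3, e4⟩
    rw [Complex.ext_iff] at e1 e2 e3 e4
    simp only [z₁, z₂, z₃, z₄, hm, map_add, map_mul, conj_ofReal, conj_I,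
      Complex.add_re, Complex.add_im, Complex.mul_re, Complex.mul_im,
      Complex.sub_re, Complex.sub_im, Complex.neg_re, Complex.neg_im,
      Complex.I_re, Complex.I_im, Complex.ofReal_re, Complex.ofReal_im,
      Complex.ofReal_neg, Complex.ofReal_mul, Complex.zero_re, Complex.zero_im,
      Complex.re_ofNat, Complex.im_ofNat] at e1 e2 e3 e4
    obtain ⟨a1, b1⟩ := e1
    obtain ⟨a2, b2⟩ := e2
    obtain ⟨a3, b3⟩ := e3
    obtain ⟨a4, b4⟩ := e4
    ring_nf at a1 b1 a2 b2 a3 b3 a4 b4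
    have hx4 : x₄ = 0 := by nlinarith [mul_pos h₂ h₃]
    have hy2 : y₄ ^ 2 = 1 / 4 := by nlinarith [mul_pos (mul_pos h₁ h₂) h₃]
    have hy0 : y₄ ≠ 0 := by intro h; rw [h] at hy2; norm_num at hy2
    have key : ∀ a b : ℝ, 0 < a → a * y₄ * (4 * b ^ 2 - 1) = 0 → 0 < b → b = 1 / 2 := by
      intro a b ha hab hb
      have hne : a * y₄ ≠ 0 := mul_ne_zero (ne_of_gt ha) hy0
      have hb2 : 4 * b ^ 2 - 1 = 0 := by
        rcases mul_eq_zero.mp hab with h | h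
        · exact absurd h hne
        · exact h
      have h2 : (b - 1 / 2) * (b + 1 / 2) = 0 := by linear_combination hb2 / 4
      rcases mul_eq_zero.mp h2 with h | h
      · linarith
      · linarith
    have hx1 : x₁ = 1 / 2 :=
      key (x₂ * x₃) x₁ (mul_pos h₂ h₃) (by linear_combination a1) h₁
    have hx2 : x₂ = 1 / 2 :=
      key (x₁ * x₃) x₂ (mul_pos h₁ h₃) (by linear_combination a2) h₂
    have hx3 : x₃ = 1 / 2 :=
      key (x₁ * x₂) x₃ (mul_pos h₁ h₂) (by linear_combination a3) h₃
    refine ⟨hx1, hx2, hx3, hx4, ?_⟩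
    have h2 : (y₄ - 1 / 2) * (y₄ + 1 / 2) = 0 := by linear_combination hy2
    rcases mul_eq_zero.mp h2 with h | h
    · left; linarith
    · right; linarith
  · rintro ⟨hx1, hx2, hx3, hx4, hy⟩
    subst hx1 hx2 hx3 hx4
    have hmr : m = -(1 / 8) * y₄ := by rw [hm]; ring
    have hmc : (m : ℂ) = -((1 : ℂ) / 8) * (y₄ : ℂ) := by rw [hmr]; push_cast; ring
    refine ⟨?_, ?_, ?_, ?_⟩ <;>
    · simp only [z₁, z₂, z₃, z₄, hmc, map_add, map_mul, conj_ofReal, conj_I]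
      rcases hy with hy | hy <;> subst hy <;> ring_nf <;>
        rw [Complex.ext_iff] <;> norm_num [Complex.mul_re, Complex.mul_im]
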